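/- Let μ̂ₙ be the empirical mean of n i.i.d. random variables with values in [0,1] and mean μ, and let γ > 0. Conditioned on the (independent) event that at least m samples were taken, P(μ̂ - μ ≥ γ | number of samples ≥ m) ≤ exp(-2mγ²), provided the number of samples is independent of the sample values. -/

import Mathlib

open MeasureTheory ProbabilityTheory
open Real

lemma d_pos {p : ℝ} (hp0 : 0 ≤ p) (hp1 : p ≤ 1) (t : ℝ) :
    0 < (1 - p) + p * exp t := by
  nlinarith [exp_pos t, mul_nonneg hp0 (exp_pos t).le]

lemma hoeffding_log_bound {p : ℝ} (hp0 : 0 ≤ p) (hp1 : p ≤ 1) {t : ℝ} (ht : 0 ≤ t) :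
    Real.log ((1 - p) + p * exp t) ≤ p * t + t ^ 2 / 8 := by
  set d : ℝ → ℝ := fun s => (1 - p) + p * exp s with hd
  have hdpos : ∀ s, 0 < d s := fun s => d_pos hp0 hp1 s
  set g : ℝ → ℝ := fun s => p * s + s ^ 2 / 8 - Real.log (d s) with hg
  set g' : ℝ → ℝ := fun s => p + s / 4 - p * exp s / d s with hg'
  have hd' : ∀ s, HasDerivAt d (p * exp s) s := by
    intro s
    exact ((Real.hasDerivAt_exp s).const_mul p).const_add (1 - p)
  have hgderiv : ∀ s, HasDerivAt g (g' s) s := by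
    intro s
    have h1 : HasDerivAt (fun s => p * s + s ^ 2 / 8) (p + 2 * s / 8) s := by
      have := ((hasDerivAt_id s).const_mul p).add
        (((hasDerivAt_pow 2 s)).div_const 8)
      exact this.congr_deriv (by norm_num)
    have h2 : HasDerivAt (fun s => Real.log (d s)) (p * exp s / d s) s :=
      (hd' s).log (hdpos s).ne'
    have := h1.sub h2
    refine this.congr_deriv ?_
    simp [hg']; ring
  have hg'deriv : ∀ s, HasDerivAt g' (1 / 4 - p * exp s * (1 - p) / (d s) ^ 2) s := by
    intro s
    have h1 : HasDerivAt (fun s : ℝ => p + s / 4) (1 / 4) s := by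
      simpa using ((hasDerivAt_id s).div_const 4).const_add p
    have h2 : HasDerivAt (fun s => p * exp s / d s)
        ((p * exp s * d s - p * exp s * (p * exp s)) / (d s) ^ 2) s :=
      ((Real.hasDerivAt_exp s).const_mul p).div (hd' s) (hdpos s).ne'
    have := h1.sub h2
    refine this.congr_deriv ?_
    have hds : d s - p * exp s = 1 - p := by simp only [hd]; ring
    rw [← hds]
    ring
  have hg'0 : g' 0 = 0 := by simp [hg', hd]
  have hg'nonneg : ∀ s, 0 ≤ s → 0 ≤ g' s := by
    intro s hs
    have hmono : Monotone g' := by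
      apply monotone_of_deriv_nonneg
      · exact fun x => (hg'deriv x).differentiableAt
      · intro x
        rw [(hg'deriv x).deriv]
        have h4 : 4 * (p * exp x * (1 - p)) ≤ (d x) ^ 2 := by
          have hdx : d x = p * exp x + (1 - p) := by simp only [hd]; ring
          rw [hdx]
          nlinarith [sq_nonneg (p * exp x - (1 - p))]
        have hdx2 : (0:ℝ) < (d x) ^ 2 := pow_pos (hdpos x) 2
        rw [sub_nonneg, div_le_iff₀ hdx2]
        simp only [hd] at h4 ⊢
        nlinarith [h4]
      
    calc 0 = g' 0 := hg'0.symm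
    _ ≤ g' s := hmono hs
  have hgmono : MonotoneOn g (Set.Ici 0) := by
    apply monotoneOn_of_deriv_nonneg (convex_Ici 0)
    · exact fun x _ => (hgderiv x).differentiableAt.continuousAt.continuousWithinAt
    · exact fun x _ => (hgderiv x).differentiableAt.differentiableWithinAt
    · intro x hx
      rw [(hgderiv x).deriv]
      exact hg'nonneg x (le_of_lt (by simpa using hx))
  have hg0 : g 0 = 0 := by simp [hg, hd]
  have := hgmono Set.self_mem_Ici (Set.mem_Ici.mpr ht) ht
  rw [hg0] at this
  simp only [hg] at this
  linarith

open MeasureTheory ProbabilityTheory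

lemma mgf_le_of_Icc {Ω : Type*} [MeasurableSpace Ω] {P : Measure Ω} [IsProbabilityMeasure P]
    {X : Ω → ℝ} (hXm : Measurable X) (hX : ∀ ω, X ω ∈ Set.Icc (0:ℝ) 1)
    {μ : ℝ} (hμ : ∫ ω, X ω ∂P = μ) {t : ℝ} (ht : 0 ≤ t) :
    mgf X P t ≤ exp (μ * t + t ^ 2 / 8) := by
  have hμ0 : 0 ≤ μ := hμ ▸ integral_nonneg fun ω => (hX ω).1
  have hXint : Integrable X P := by
    refine (integrable_const (1:ℝ)).mono' hXm.aestronglyMeasurable ?_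
    exact ae_of_all _ fun ω => by
      rw [Real.norm_eq_abs, abs_of_nonneg (hX ω).1]; exact (hX ω).2
  have hμ1 : μ ≤ 1 := by
    rw [← hμ]
    calc ∫ ω, X ω ∂P ≤ ∫ _, (1:ℝ) ∂P :=
      integral_mono hXint (integrable_const 1) fun ω => (hX ω).2
    _ = 1 := by simp
  -- pointwise convexity bound
  have hpt : ∀ ω, exp (t * X ω) ≤ 1 - X ω + X ω * exp t := by
    intro ω
    obtain ⟨hx0, hx1⟩ := hX ω
    have := convexOn_exp.2 (Set.mem_univ (0:ℝ)) (Set.mem_univ t)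
      (by linarith : 0 ≤ 1 - X ω) hx0 (by ring)
    simpa [mul_comm] using this
  have hint : Integrable (fun ω => exp (t * X ω)) P := by
    refine (integrable_const (exp t)).mono'
      ((hXm.const_mul t).exp.aestronglyMeasurable) ?_
    refine ae_of_all _ fun ω => ?_
    rw [Real.norm_eq_abs, abs_of_nonneg (exp_nonneg _)]
    exact exp_le_exp.mpr (by nlinarith [(hX ω).1, (hX ω).2])
  have h1 : mgf X P t ≤ 1 - μ + μ * exp t := by
    rw [mgf, ← hμ]
    calc ∫ ω, exp (t * X ω) ∂P ≤ ∫ ω, (1 - X ω + X ω * exp t) ∂P :=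
      integral_mono hint (by
        exact ((integrable_const 1).sub hXint).add (hXint.mul_const _)) hpt
    _ = 1 - (∫ ω, X ω ∂P) + (∫ ω, X ω ∂P) * exp t := by
      have e1 : Integrable (fun ω => 1 - X ω) P := (integrable_const 1).sub hXint
      have e2 : Integrable (fun ω => X ω * exp t) P := hXint.mul_const _
      rw [show (fun ω => 1 - X ω + X ω * exp t) = (fun ω => (1 - X ω) + X ω * exp t) from rfl]
      rw [integral_add e1 e2, integral_mul_const,
        integral_sub (integrable_const 1) hXint]
      simp
  calc mgf X P t ≤ 1 - μ + μ * exp t := h1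
  _ = exp (Real.log ((1 - μ) + μ * exp t)) := by
      rw [Real.exp_log (d_pos hμ0 hμ1 t)]
  _ ≤ exp (μ * t + t ^ 2 / 8) :=
      exp_le_exp.mpr (hoeffding_log_bound hμ0 hμ1 ht)

lemma chernoff_sum {Ω : Type*} [MeasurableSpace Ω] {P : Measure Ω} [IsProbabilityMeasure P]
    {X : ℕ → Ω → ℝ} (hmeas : ∀ k, Measurable (X k))
    (hrange : ∀ k ω, X k ω ∈ Set.Icc (0:ℝ) 1)
    (hindep : iIndepFun X P)
    {μ : ℝ} (hmean : ∀ k, ∫ ω, X k ω ∂P = μ)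
    {γ : ℝ} (hγ : 0 < γ) (n : ℕ) :
    P {ω | (n : ℝ) * (μ + γ) ≤ ∑ k ∈ Finset.range n, X k ω}
      ≤ ENNReal.ofReal (exp (-2 * n * γ ^ 2)) := by
  set t : ℝ := 4 * γ with htdef
  have ht : 0 ≤ t := by positivity
  have hintk : ∀ k ∈ Finset.range n, Integrable (fun ω => exp (t * X k ω)) P := by
    intro k _
    refine (integrable_const (exp t)).mono'
      (((hmeas k).const_mul t).exp.aestronglyMeasurable) ?_
    refine ae_of_all _ fun ω => ?_
    rw [Real.norm_eq_abs, abs_of_nonneg (exp_nonneg _)]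
    exact exp_le_exp.mpr (by nlinarith [(hrange k ω).1, (hrange k ω).2])
  have hSint : Integrable (fun ω => exp (t * (∑ k ∈ Finset.range n, X k) ω)) P :=
    hindep.integrable_exp_mul_sum hmeas hintk
  have hch := measure_ge_le_exp_mul_mgf (X := ∑ k ∈ Finset.range n, X k) (μ := P)
    ((n : ℝ) * (μ + γ)) ht hSint
  have hprod : mgf (∑ k ∈ Finset.range n, X k) P t
      ≤ exp ((n : ℝ) * (μ * t + t ^ 2 / 8)) := by
    rw [hindep.mgf_sum hmeas]
    calc ∏ k ∈ Finset.range n, mgf (X k) P t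
        ≤ ∏ _k ∈ Finset.range n, exp (μ * t + t ^ 2 / 8) :=
          Finset.prod_le_prod (fun k _ => mgf_nonneg)
            (fun k _ => mgf_le_of_Icc (hmeas k) (hrange k) (hmean k) ht)
    _ = exp ((n : ℝ) * (μ * t + t ^ 2 / 8)) := by
        rw [Finset.prod_const, ← Real.exp_nat_mul]; norm_num
  have hset : {ω | (n : ℝ) * (μ + γ) ≤ ∑ k ∈ Finset.range n, X k ω}
      = {ω | (n : ℝ) * (μ + γ) ≤ (∑ k ∈ Finset.range n, X k) ω} := by
    simp [Finset.sum_apply]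
  rw [hset]
  rw [ENNReal.le_ofReal_iff_toReal_le (measure_ne_top _ _) (exp_nonneg _)]
  calc (P {ω | (n : ℝ) * (μ + γ) ≤ (∑ k ∈ Finset.range n, X k) ω}).toReal
      ≤ exp (-t * ((n : ℝ) * (μ + γ))) * mgf (∑ k ∈ Finset.range n, X k) P t := hch
  _ ≤ exp (-t * ((n : ℝ) * (μ + γ))) * exp ((n : ℝ) * (μ * t + t ^ 2 / 8)) := by
      exact mul_le_mul_of_nonneg_left hprod (exp_nonneg _)
  _ = exp (-2 * n * γ ^ 2) := by
      rw [← Real.exp_add]; congr 1; simp only [htdef]; ring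

/-- Hoeffding bound with an independent random sample size: if the sample count `T` is
independent of the i.i.d. `[0,1]`-valued samples with mean `μ`, then
`P(μ̂ - μ ≥ γ, T ≥ m) ≤ P(T ≥ m) exp(-2mγ²)`. -/
theorem hoeffding_random_sample_size
    {Ω : Type*} [MeasurableSpace Ω] (P : Measure Ω) [IsProbabilityMeasure P]
    (X : ℕ → Ω → ℝ) (μ : ℝ)
    (hmeas : ∀ k, Measurable (X k))
    (hrange : ∀ k ω, X k ω ∈ Set.Icc (0:ℝ) 1)
    (hindep : iIndepFun X P)
    (hident : ∀ k, Measure.map (X k) P = Measure.map (X 0) P)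
    (hmean : ∀ k, ∫ ω, X k ω ∂P = μ)
    (T : Ω → ℕ) (hT : Measurable T) (hT1 : ∀ ω, 1 ≤ T ω)
    (hTX : IndepFun T (fun ω => (fun k => X k ω)) P)
    (γ : ℝ) (hγ : 0 < γ) (m : ℕ) :
    P {ω | (∑ k ∈ Finset.range (T ω), X k ω) / (T ω : ℝ) - μ ≥ γ ∧ m ≤ T ω}
      ≤ P {ω | m ≤ T ω} * ENNReal.ofReal (Real.exp (-2 * (m : ℝ) * γ ^ 2)) := by
  classical
  set c : ENNReal := ENNReal.ofReal (Real.exp (-2 * (m : ℝ) * γ ^ 2)) with hc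
  set A : ℕ → Set Ω := fun n => {ω | (n:ℝ) * (μ + γ) ≤ ∑ k ∈ Finset.range n, X k ω}
    with hA
  have hAmeas : ∀ n, MeasurableSet (A n) :=
    fun n => measurableSet_le measurable_const (Finset.measurable_sum _ fun k _ => hmeas k)
  set C : ℕ → Set Ω := fun n => if m ≤ n then T ⁻¹' {n} ∩ A n else ∅ with hC
  set D : ℕ → Set Ω := fun n => if m ≤ n then T ⁻¹' {n} else (∅ : Set Ω) with hD
  have hCmeas : ∀ n, MeasurableSet (C n) := by
    intro n
    by_cases h : m ≤ n
    · simp only [hC, if_pos h]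
      exact (hT (measurableSet_singleton n)).inter (hAmeas n)
    · simp [hC, h]
  have hDmeas : ∀ n, MeasurableSet (D n) := by
    intro n
    by_cases h : m ≤ n
    · simp only [hD, if_pos h]; exact hT (measurableSet_singleton n)
    · simp [hD, h]
  have hCsub : ∀ n, C n ⊆ T ⁻¹' {n} := by
    intro n
    by_cases h : m ≤ n
    · simp only [hC, if_pos h]; exact Set.inter_subset_left
    · simp [hC, h]
  have hDsub : ∀ n, D n ⊆ T ⁻¹' {n} := by
    intro n
    by_cases h : m ≤ n
    · simp only [hD, if_pos h]; exact subset_rfl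
    · simp [hD, h]
  have hdisj : Pairwise (Function.onFun Disjoint C) := by
    intro i j hij
    refine Set.disjoint_left.mpr fun ω hi hj => hij ?_
    have h1 := hCsub i hi
    have h2 := hCsub j hj
    simp only [Set.mem_preimage, Set.mem_singleton_iff] at h1 h2
    rw [← h1, ← h2]
  have hDdisj : Pairwise (Function.onFun Disjoint D) := by
    intro i j hij
    refine Set.disjoint_left.mpr fun ω hi hj => hij ?_
    have h1 := hDsub i hi
    have h2 := hDsub j hj
    simp only [Set.mem_preimage, Set.mem_singleton_iff] at h1 h2
    rw [← h1, ← h2]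
  have hE : {ω | (∑ k ∈ Finset.range (T ω), X k ω) / (T ω : ℝ) - μ ≥ γ ∧ m ≤ T ω}
      = ⋃ n, C n := by
    ext ω
    simp only [Set.mem_setOf_eq, Set.mem_iUnion]
    constructor
    · rintro ⟨h1, h2⟩
      refine ⟨T ω, ?_⟩
      have hn : (0:ℝ) < (T ω : ℝ) := by exact_mod_cast hT1 ω
      have hA' : ω ∈ A (T ω) := by
        simp only [hA, Set.mem_setOf_eq]
        rw [ge_iff_le, le_sub_iff_add_le] at h1
        have h1' := (le_div_iff₀ hn).mp h1
        linarith [h1']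
      simp only [hC, if_pos h2]
      exact ⟨rfl, hA'⟩
    · rintro ⟨n, hn⟩
      by_cases h : m ≤ n
      · simp only [hC, if_pos h, Set.mem_inter_iff, Set.mem_preimage,
          Set.mem_singleton_iff] at hn
        obtain ⟨hTn, hAn⟩ := hn
        subst hTn
        have hpos : (0:ℝ) < (T ω : ℝ) := by exact_mod_cast hT1 ω
        simp only [hA, Set.mem_setOf_eq] at hAn
        constructor
        · rw [ge_iff_le, le_sub_iff_add_le, le_div_iff₀ hpos]
          linarith [hAn]
        · exact h
      · simp [hC, h] at hn
  -- per-index bound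
  have hbound : ∀ n, P (C n) ≤ P (D n) * c := by
    intro n
    by_cases h : m ≤ n
    · simp only [hC, hD, if_pos h]
      have hB : MeasurableSet {f : ℕ → ℝ | (n:ℝ) * (μ + γ) ≤ ∑ k ∈ Finset.range n, f k} :=
        measurableSet_le measurable_const (Finset.measurable_sum _ fun k _ =>
          measurable_pi_apply k)
      have hpre : (fun ω => (fun k => X k ω)) ⁻¹'
          {f : ℕ → ℝ | (n:ℝ) * (μ + γ) ≤ ∑ k ∈ Finset.range n, f k} = A n := rfl
      have hind := hTX.measure_inter_preimage_eq_mul (s := {n})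
        (t := {f : ℕ → ℝ | (n:ℝ) * (μ + γ) ≤ ∑ k ∈ Finset.range n, f k})
        (measurableSet_singleton n) hB
      rw [hpre] at hind
      rw [hind]
      refine mul_le_mul_right ?_ _
      calc P (A n) ≤ ENNReal.ofReal (Real.exp (-2 * n * γ ^ 2)) :=
        chernoff_sum hmeas hrange hindep hmean hγ n
      _ ≤ c := by
        rw [hc]
        apply ENNReal.ofReal_le_ofReal
        apply Real.exp_le_exp.mpr
        have : (m:ℝ) ≤ n := by exact_mod_cast h
        nlinarith [sq_nonneg γ]
    · simp [hC, h]
  have hDeq : (⋃ n, D n) = {ω | m ≤ T ω} := by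
    ext ω
    simp only [Set.mem_iUnion, Set.mem_setOf_eq]
    constructor
    · rintro ⟨n, hn⟩
      by_cases h : m ≤ n
      · simp only [hD, if_pos h, Set.mem_preimage, Set.mem_singleton_iff] at hn
        omega
      · simp [hD, h] at hn
    · intro h
      exact ⟨T ω, by simp [hD, h]⟩
  calc P {ω | (∑ k ∈ Finset.range (T ω), X k ω) / (T ω : ℝ) - μ ≥ γ ∧ m ≤ T ω}
      = ∑' n, P (C n) := by rw [hE, measure_iUnion hdisj hCmeas]
  _ ≤ ∑' n, P (D n) * c := ENNReal.tsum_le_tsum hbound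
  _ = (∑' n, P (D n)) * c := ENNReal.tsum_mul_right
  _ = P {ω | m ≤ T ω} * c := by rw [← measure_iUnion hDdisj hDmeas, hDeq]
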